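/- Let p ≥ 3 be a prime, N_p(u) = #{(m,n) : m ≥ n ≥ 0, p ∤ C(m,n), m + n < u}, and φ_p(q) the count on the anti-diagonal m+n = q. Then for every positive integer u and nonnegative integer k, N_p(p^k u) = (p(p+1)/2)^k · N_p(u) − ((p^k − 1)/2) · ((p+1)/2)^k · φ_p(u − 1). -/

import Mathlib

/-- `φ_p(q)`: number of points in Pascal's triangle mod `p` on the anti-diagonal `m + n = q`. -/
noncomputable def phi (p : ℕ) (q : ℤ) : ℕ :=
  {mn : ℕ × ℕ | mn.2 ≤ mn.1 ∧ (mn.1 : ℤ) + (mn.2 : ℤ) = q ∧ ¬ p ∣ Nat.choose mn.1 mn.2}.ncard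

/-- `N_p(u)`: number of `(m,n)` with `m ≥ n ≥ 0`, `p ∤ C(m,n)` and `m + n < u`. -/
noncomputable def Npas (p : ℕ) (u : ℕ) : ℕ :=
  {mn : ℕ × ℕ | mn.2 ≤ mn.1 ∧ mn.1 + mn.2 < u ∧ ¬ p ∣ Nat.choose mn.1 mn.2}.ncard


open Finset

namespace NpasAux

variable (p : ℕ)

def Pset (q : ℕ) : Finset (ℕ × ℕ) :=
  (Finset.HasAntidiagonal.antidiagonal q).filter fun mn => ¬ p ∣ Nat.choose mn.1 mn.2

def Nset (u : ℕ) : Finset (ℕ × ℕ) :=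
  ((Finset.range u) ×ˢ (Finset.range u)).filter
    fun mn => mn.1 + mn.2 < u ∧ ¬ p ∣ Nat.choose mn.1 mn.2

lemma mem_Pset {q : ℕ} {mn : ℕ × ℕ} :
    mn ∈ Pset p q ↔ mn.1 + mn.2 = q ∧ ¬ p ∣ Nat.choose mn.1 mn.2 := by
  simp [Pset, Finset.HasAntidiagonal.mem_antidiagonal]

lemma mem_Nset {u : ℕ} {mn : ℕ × ℕ} :
    mn ∈ Nset p u ↔ mn.1 + mn.2 < u ∧ ¬ p ∣ Nat.choose mn.1 mn.2 := by
  simp only [Nset, mem_filter, mem_product, mem_range]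
  constructor
  · tauto
  · intro h; exact ⟨⟨by omega, by omega⟩, h⟩

lemma le_of_not_dvd {m n : ℕ} (h : ¬ p ∣ Nat.choose m n) : n ≤ m := by
  by_contra hc
  apply h
  rw [Nat.choose_eq_zero_of_lt (Nat.lt_of_not_le hc)]
  exact dvd_zero p

lemma phi_eq (q : ℕ) : phi p q = (Pset p q).card := by
  rw [phi, show {mn : ℕ × ℕ | mn.2 ≤ mn.1 ∧ (mn.1 : ℤ) + (mn.2 : ℤ) = (q : ℤ) ∧
      ¬ p ∣ Nat.choose mn.1 mn.2} = ↑(Pset p q) from ?_, Set.ncard_coe_finset]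
  ext ⟨m, n⟩
  simp only [Set.mem_setOf_eq, Finset.coe_filter, Pset, Finset.HasAntidiagonal.mem_antidiagonal,
    Set.mem_setOf_eq, Finset.mem_coe, mem_filter]
  constructor
  · rintro ⟨h1, h2, h3⟩; exact ⟨by exact_mod_cast h2, h3⟩
  · rintro ⟨h1, h2⟩; exact ⟨le_of_not_dvd p h2, by exact_mod_cast h1, h2⟩

lemma Npas_eq (u : ℕ) : Npas p u = (Nset p u).card := by
  rw [Npas, show {mn : ℕ × ℕ | mn.2 ≤ mn.1 ∧ mn.1 + mn.2 < u ∧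
      ¬ p ∣ Nat.choose mn.1 mn.2} = ↑(Nset p u) from ?_, Set.ncard_coe_finset]
  ext ⟨m, n⟩
  simp only [Set.mem_setOf_eq, Finset.mem_coe, mem_Nset]
  exact ⟨fun ⟨_, h2, h3⟩ => ⟨h2, h3⟩, fun ⟨h2, h3⟩ => ⟨le_of_not_dvd p h3, h2, h3⟩⟩

lemma lucas_step (hp : p.Prime) (m n : ℕ) :
    ¬ p ∣ Nat.choose m n ↔ ¬ p ∣ Nat.choose (m / p) (n / p) ∧ n % p ≤ m % p := by
  haveI : Fact p.Prime := ⟨hp⟩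
  have hmod := Choose.choose_modEq_choose_mod_mul_choose_div_nat (n := m) (k := n) (p := p)
  have hdvd : p ∣ Nat.choose m n ↔
      p ∣ Nat.choose (m % p) (n % p) * Nat.choose (m / p) (n / p) :=
    (Nat.modEq_zero_iff_dvd).symm.trans
      (Iff.trans ⟨fun h => hmod.symm.trans h, fun h => hmod.trans h⟩ Nat.modEq_zero_iff_dvd)
  have hsmall : p ∣ Nat.choose (m % p) (n % p) ↔ ¬ n % p ≤ m % p := by
    constructor
    · intro h hle
      have hfac := Nat.choose_mul_factorial_mul_factorial hle
      have : p ∣ Nat.factorial (m % p) := hfac ▸ Dvd.dvd.mul_right (Dvd.dvd.mul_right h _) _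
      have := (Nat.Prime.dvd_factorial hp).mp this
      have := Nat.mod_lt m hp.pos
      omega
    · intro h
      rw [Nat.choose_eq_zero_of_lt (by omega)]
      exact dvd_zero p
  rw [hdvd, hp.dvd_mul, hsmall]
  tauto

end NpasAux
namespace NpasAux

variable (p : ℕ)

/-- good digit pairs -/
def D : Finset (ℕ × ℕ) := ((range p) ×ˢ (range p)).filter fun ab => ab.2 ≤ ab.1
def Dlo : Finset (ℕ × ℕ) := (D p).filter fun ab => ab.1 + ab.2 < p
def Dlt : Finset (ℕ × ℕ) := (D p).filter fun ab => ab.1 + ab.2 + 1 < p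
def Deq : Finset (ℕ × ℕ) := (D p).filter fun ab => ab.1 + ab.2 + 1 = p
def Dhi : Finset (ℕ × ℕ) := (D p).filter fun ab => p ≤ ab.1 + ab.2

lemma mem_D {ab : ℕ × ℕ} : ab ∈ D p ↔ ab.1 < p ∧ ab.2 < p ∧ ab.2 ≤ ab.1 := by
  simp [D, mem_product, mem_range]; tauto

lemma card_D {h : ℕ} (hph : p = 2 * h + 1) : (D p).card = (2 * h + 1) * (h + 1) := by
  have hbi : D p = (range p).biUnion (fun a => (range (a + 1)).image (fun b => (a, b))) := by
    ext ⟨a, b⟩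
    simp only [mem_D, mem_biUnion, mem_range, mem_image]
    constructor
    · rintro ⟨h1, h2, h3⟩; exact ⟨a, h1, b, by omega, rfl⟩
    · rintro ⟨x, hx, y, hy, heq⟩
      obtain ⟨h1, h2⟩ := Prod.mk.injEq x y a b ▸ heq
      omega
  rw [hbi, Finset.card_biUnion]
  · have : ∀ a ∈ range p, ((range (a + 1)).image (fun b => (a, b))).card = a + 1 := by
      intro a _
      rw [Finset.card_image_of_injective _ (fun x y hxy => (Prod.mk.injEq _ _ _ _).mp hxy |>.2),
        Finset.card_range]
    rw [Finset.sum_congr rfl this]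
    have hsum : (∑ a ∈ range p, (a + 1)) = (∑ a ∈ range p, a) + p := by
      rw [Finset.sum_add_distrib, Finset.sum_const, Finset.card_range, smul_eq_mul, mul_one]
    have hg := Finset.sum_range_id_mul_two p
    subst hph
    have : (∑ a ∈ range (2 * h + 1), a) = (2 * h + 1) * h := by
      have h2 : (2 * h + 1) * (2 * h + 1 - 1) = ((2 * h + 1) * h) * 2 := by
        simp only [Nat.add_sub_cancel]; ring
      omega
    rw [hsum, this]; ring
  · intro x _ y _ hxy
    simp only [Finset.disjoint_left, mem_image, mem_range]
    rintro ⟨a, b⟩ ⟨i, hi, heq⟩ ⟨j, hj, heq2⟩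
    apply hxy
    have := (Prod.mk.injEq _ _ _ _).mp heq
    have := (Prod.mk.injEq _ _ _ _).mp heq2
    omega

lemma card_Deq {h : ℕ} (hph : p = 2 * h + 1) : (Deq p).card = h + 1 := by
  have himg : Deq p = (Finset.Icc h (2 * h)).image (fun a => (a, 2 * h - a)) := by
    ext ⟨a, b⟩
    simp only [Deq, mem_filter, mem_D, mem_image, Finset.mem_Icc]
    constructor
    · rintro ⟨⟨h1, h2, h3⟩, h4⟩
      exact ⟨a, by omega, by rw [Prod.mk.injEq]; omega⟩
    · rintro ⟨x, hx, heq⟩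
      have := (Prod.mk.injEq _ _ _ _).mp heq
      omega
  rw [himg, Finset.card_image_of_injective _ (fun x y hxy => ((Prod.mk.injEq _ _ _ _).mp hxy).1),
    Nat.card_Icc]
  omega

lemma card_Dhi {h : ℕ} (hph : p = 2 * h + 1) : (Dhi p).card = (Dlt p).card := by
  apply Finset.card_bij' (fun ab _ => (p - 1 - ab.2, p - 1 - ab.1))
    (fun ab _ => (p - 1 - ab.2, p - 1 - ab.1))
  · rintro ⟨a, b⟩ hab
    simp only [Dhi, Dlt, mem_filter, mem_D] at *
    omega
  · rintro ⟨a, b⟩ hab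
    simp only [Dhi, Dlt, mem_filter, mem_D] at *
    omega
  · rintro ⟨a, b⟩ hab
    simp only [Dhi, mem_filter, mem_D] at hab
    simp only [Prod.mk.injEq]
    omega
  · rintro ⟨a, b⟩ hab
    simp only [Dlt, mem_filter, mem_D] at hab
    simp only [Prod.mk.injEq]
    omega

lemma card_Dlo {h : ℕ} (hph : p = 2 * h + 1) : (Dlo p).card = (h + 1) * (h + 1) := by
  have h1 : (Dlt p).card + (Deq p).card = (Dlo p).card := by
    rw [show Dlt p = (Dlo p).filter (fun ab => ab.1 + ab.2 + 1 < p) from ?_,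
        show Deq p = (Dlo p).filter (fun ab => ¬ (ab.1 + ab.2 + 1 < p)) from ?_]
    · exact Finset.card_filter_add_card_filter_not _
    · ext ab; simp only [Deq, Dlo, mem_filter, mem_D]; omega
    · ext ab; simp only [Dlt, Dlo, mem_filter, mem_D]; omega
  have h2 : (Dlo p).card + (Dhi p).card = (D p).card := by
    rw [show Dhi p = (D p).filter (fun ab => ¬ (ab.1 + ab.2 < p)) from ?_]
    · exact Finset.card_filter_add_card_filter_not _
    · ext ab; simp only [Dhi, mem_filter, mem_D]; omega
  have h3 := card_Dhi p hph
  have h4 := card_D p hph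
  have h5 := card_Deq p hph
  have h6 : (2 * h + 1) * (h + 1) + (h + 1) = 2 * ((h + 1) * (h + 1)) := by ring
  linarith

lemma divmod_uniq {A s q r : ℕ} (hp : 0 < p) (hs : s < p) (hr : r < p)
    (heq : p * A + s = p * q + r) : A = q ∧ s = r := by
  have h1 : (p * A + s) / p = A := by rw [Nat.mul_add_div hp, Nat.div_eq_of_lt hs]; omega
  have h2 : (p * q + r) / p = q := by rw [Nat.mul_add_div hp, Nat.div_eq_of_lt hr]; omega
  have h3 : (p * A + s) % p = s := by rw [Nat.mul_add_mod, Nat.mod_eq_of_lt hs]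
  have h4 : (p * q + r) % p = r := by rw [Nat.mul_add_mod, Nat.mod_eq_of_lt hr]
  rw [heq] at h1 h3
  omega

lemma digit_sum (hp : 0 < p) {m n q r : ℕ} (hr : r < p) (hmn : m + n = p * q + r) :
    (m / p + n / p = q ∧ m % p + n % p = r) ∨
      (m / p + n / p + 1 = q ∧ m % p + n % p = p + r) := by
  have hm := Nat.div_add_mod m p
  have hn := Nat.div_add_mod n p
  have hmp := Nat.mod_lt m hp
  have hnp := Nat.mod_lt n hp
  have key : p * (m / p + n / p) + (m % p + n % p) = p * q + r := by
    rw [Nat.mul_add]; omega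
  rcases lt_or_ge (m % p + n % p) p with hs | hs
  · exact Or.inl (divmod_uniq p hp hs hr key)
  · right
    have key2 : p * (m / p + n / p + 1) + (m % p + n % p - p) = p * q + r := by
      rw [Nat.mul_add, Nat.mul_one]; omega
    have := divmod_uniq p hp (by omega) hr key2
    omega

end NpasAux
namespace NpasAux

variable (p : ℕ)

lemma dm (hp0 : 0 < p) (m' a : ℕ) (ha : a < p) :
    (p * m' + a) / p = m' ∧ (p * m' + a) % p = a := by
  constructor
  · rw [Nat.mul_add_div hp0, Nat.div_eq_of_lt ha]
    omega
  · rw [Nat.mul_add_mod, Nat.mod_eq_of_lt ha]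

lemma card_divmod (hp0 : 0 < p) (S : Finset (ℕ × ℕ)) (T : Finset ((ℕ × ℕ) × (ℕ × ℕ)))
    (hiff : ∀ m' n' a b, a < p → b < p →
      ((p * m' + a, p * n' + b) ∈ S ↔ ((m', n'), (a, b)) ∈ T))
    (hT : ∀ x ∈ T, x.2.1 < p ∧ x.2.2 < p) :
    S.card = T.card := by
  apply Finset.card_bij' (fun mn _ => ((mn.1 / p, mn.2 / p), (mn.1 % p, mn.2 % p)))
    (fun x _ => (p * x.1.1 + x.2.1, p * x.1.2 + x.2.2))
  · rintro ⟨m, n⟩ hmn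
    have e : (p * (m / p) + m % p, p * (n / p) + n % p) = (m, n) := by
      rw [Nat.div_add_mod, Nat.div_add_mod]
    exact (hiff (m / p) (n / p) (m % p) (n % p) (Nat.mod_lt _ hp0) (Nat.mod_lt _ hp0)).mp
      (by rw [e]; exact hmn)
  · rintro ⟨⟨m', n'⟩, ⟨a, b⟩⟩ hx
    exact (hiff m' n' a b (hT _ hx).1 (hT _ hx).2).mpr hx
  · rintro ⟨m, n⟩ _
    simp only [Prod.mk.injEq]
    exact ⟨Nat.div_add_mod m p, Nat.div_add_mod n p⟩
  · rintro ⟨⟨m', n'⟩, ⟨a, b⟩⟩ hx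
    obtain ⟨ha, hb⟩ := hT _ hx
    simp only [Prod.mk.injEq]
    exact ⟨⟨(dm p hp0 m' a ha).1, (dm p hp0 n' b hb).1⟩,
      (dm p hp0 m' a ha).2, (dm p hp0 n' b hb).2⟩

lemma Nset_succ (v : ℕ) : (Nset p (v + 1)).card = (Nset p v).card + (Pset p v).card := by
  have h1 : (Nset p (v + 1)).filter (fun mn => mn.1 + mn.2 < v) = Nset p v := by
    ext mn
    simp only [mem_filter, mem_Nset]
    constructor
    · rintro ⟨⟨_, h2⟩, h3⟩; exact ⟨h3, h2⟩
    · rintro ⟨h1, h2⟩; exact ⟨⟨by omega, h2⟩, h1⟩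
  have h2 : (Nset p (v + 1)).filter (fun mn => ¬ mn.1 + mn.2 < v) = Pset p v := by
    ext mn
    simp only [mem_filter, mem_Nset, mem_Pset]
    constructor
    · rintro ⟨⟨h1, h2⟩, h3⟩; exact ⟨by omega, h2⟩
    · rintro ⟨h1, h2⟩; exact ⟨⟨by omega, h2⟩, by omega⟩
  rw [← Finset.card_filter_add_card_filter_not
    (s := Nset p (v + 1)) (p := fun mn => mn.1 + mn.2 < v), h1, h2]

lemma card_Pset_mul (hp : p.Prime) {h : ℕ} (hph : p = 2 * h + 1) (w : ℕ) :
    (Pset p (p * w + 2 * h)).card = (Pset p w).card * (h + 1) := by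
  have hp0 : 0 < p := hp.pos
  rw [← card_Deq p hph, ← Finset.card_product]
  apply card_divmod p hp0
  · intro m' n' a b ha hb
    rw [mem_Pset, Finset.mem_product, mem_Pset, lucas_step p hp,
      (dm p hp0 m' a ha).1, (dm p hp0 m' a ha).2, (dm p hp0 n' b hb).1, (dm p hp0 n' b hb).2]
    simp only [Deq, mem_filter, mem_D]
    have e1 : p * (m' + n') = p * m' + p * n' := Nat.mul_add p m' n'
    constructor
    · rintro ⟨hsum, hnd, hba⟩
      have he2 : p * (m' + n') + (a + b) = p * w + 2 * h := by omega
      have key : m' + n' = w ∧ a + b = 2 * h := by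
        rcases lt_or_ge (a + b) p with hs | hs
        · exact divmod_uniq p hp0 hs (by omega) he2
        · have he3 : p * (m' + n' + 1) + (a + b - p) = p * w + 2 * h := by
            rw [Nat.mul_add, Nat.mul_one]; omega
          have := divmod_uniq p hp0 (by omega) (by omega) he3
          omega
      exact ⟨⟨key.1, hnd⟩, ⟨ha, hb, hba⟩, by omega⟩
    · rintro ⟨⟨hw, hnd⟩, ⟨_, _, hba⟩, hab⟩
      refine ⟨?_, hnd, hba⟩
      have : p * m' + p * n' = p * w := by rw [← Nat.mul_add, hw]
      omega
  · rintro ⟨⟨m', n'⟩, ⟨a, b⟩⟩ hx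
    have := (Finset.mem_product.mp hx).2
    simp only [Deq, mem_filter, mem_D] at this
    exact ⟨this.1.1, this.1.2.1⟩

lemma card_Nset_mul (hp : p.Prime) {h : ℕ} (hph : p = 2 * h + 1) (v : ℕ) :
    (Nset p (p * (v + 1))).card =
      (2 * h + 1) * (h + 1) * (Nset p v).card + (h + 1) * (h + 1) * (Pset p v).card := by
  have hp0 : 0 < p := hp.pos
  rw [← Finset.card_filter_add_card_filter_not
    (s := Nset p (p * (v + 1))) (p := fun mn => mn.1 / p + mn.2 / p < v)]
  have hc1 : ((Nset p (p * (v + 1))).filter (fun mn => mn.1 / p + mn.2 / p < v)).card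
      = (Nset p v ×ˢ D p).card := by
    apply card_divmod p hp0
    · intro m' n' a b ha hb
      rw [mem_filter, mem_Nset, Finset.mem_product, mem_Nset, lucas_step p hp,
        (dm p hp0 m' a ha).1, (dm p hp0 m' a ha).2, (dm p hp0 n' b hb).1, (dm p hp0 n' b hb).2]
      dsimp only
      rw [mem_D]
      dsimp only
      constructor
      · rintro ⟨⟨_, hnd, hba⟩, hv⟩
        exact ⟨⟨hv, hnd⟩, ha, hb, hba⟩
      · rintro ⟨⟨hv, hnd⟩, _, _, hba⟩
        have e1 : p * (m' + n' + 1) ≤ p * v := Nat.mul_le_mul_left p (by omega)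
        have e2 : p * (m' + n' + 1) = p * m' + p * n' + p := by rw [Nat.mul_add, Nat.mul_add, Nat.mul_one]
        have e3 : p * (v + 1) = p * v + p := by rw [Nat.mul_add, Nat.mul_one]
        exact ⟨⟨by omega, hnd, hba⟩, hv⟩
    · rintro ⟨⟨m', n'⟩, ⟨a, b⟩⟩ hx
      have := (Finset.mem_product.mp hx).2
      rw [mem_D] at this
      exact ⟨this.1, this.2.1⟩
  have hc2 : ((Nset p (p * (v + 1))).filter (fun mn => ¬ mn.1 / p + mn.2 / p < v)).card
      = (Pset p v ×ˢ Dlo p).card := by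
    apply card_divmod p hp0
    · intro m' n' a b ha hb
      rw [mem_filter, mem_Nset, Finset.mem_product, mem_Pset, lucas_step p hp,
        (dm p hp0 m' a ha).1, (dm p hp0 m' a ha).2, (dm p hp0 n' b hb).1, (dm p hp0 n' b hb).2]
      simp only [Dlo, mem_filter, mem_D]
      have e1 : p * (m' + n') = p * m' + p * n' := Nat.mul_add p m' n'
      have e3 : p * (v + 1) = p * v + p := by rw [Nat.mul_add, Nat.mul_one]
      constructor
      · rintro ⟨⟨hlt, hnd, hba⟩, hv⟩
        rcases Nat.lt_or_ge (m' + n') (v + 1) with hcase | hcase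
        · have e4 : p * v ≤ p * (m' + n') := Nat.mul_le_mul_left p (by omega)
          have e5 : p * (m' + n') ≤ p * v := Nat.mul_le_mul_left p (by omega)
          exact ⟨⟨by omega, hnd⟩, ⟨ha, hb, hba⟩, by omega⟩
        · have e4 : p * (v + 1) ≤ p * (m' + n') := Nat.mul_le_mul_left p hcase
          omega
      · rintro ⟨⟨hw, hnd⟩, ⟨_, _, hba⟩, hab⟩
        have e4 : p * (m' + n') = p * v := by rw [hw]
        exact ⟨⟨by omega, hnd, hba⟩, by omega⟩
    · rintro ⟨⟨m', n'⟩, ⟨a, b⟩⟩ hx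
      have := (Finset.mem_product.mp hx).2
      simp only [Dlo, mem_filter, mem_D] at this
      exact ⟨this.1.1, this.1.2.1⟩
  rw [hc1, hc2, Finset.card_product, Finset.card_product, card_D p hph, card_Dlo p hph]
  ring

end NpasAux
namespace NpasAux

variable (p : ℕ)

lemma krec (hp : p.Prime) {h : ℕ} (hph : p = 2 * h + 1) (u : ℕ) (hu : 0 < u) :
    (((Nset p (p * u)).card : ℤ)) =
      ((2 * h + 1) * (h + 1) : ℤ) * (Nset p u).card
        - ((h : ℤ) * (h + 1)) * (Pset p (u - 1)).card := by
  obtain ⟨v, rfl⟩ : ∃ v, u = v + 1 := ⟨u - 1, by omega⟩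
  have k1 := card_Nset_mul p hp hph v
  have k2 := Nset_succ p v
  have k1' : (((Nset p (p * (v + 1))).card : ℤ)) =
      ((2 * h + 1) * (h + 1) : ℤ) * (Nset p v).card
        + ((h : ℤ) + 1) * ((h : ℤ) + 1) * (Pset p v).card := by exact_mod_cast k1
  have k2' : (((Nset p (v + 1)).card : ℤ)) = (Nset p v).card + (Pset p v).card := by
    exact_mod_cast k2
  rw [show v + 1 - 1 = v from rfl, k1', k2']
  ring

lemma kphi (hp : p.Prime) {h : ℕ} (hph : p = 2 * h + 1) (u : ℕ) (hu : 0 < u) (k : ℕ) :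
    (((Pset p (p ^ k * u - 1)).card : ℤ)) = ((h : ℤ) + 1) ^ k * (Pset p (u - 1)).card := by
  induction k with
  | zero => simp
  | succ k ih =>
    have hA : 0 < p ^ k * u := Nat.mul_pos (pow_pos hp.pos k) hu
    have hstep : p ^ (k + 1) * u - 1 = p * (p ^ k * u - 1) + 2 * h := by
      have e1 : p ^ (k + 1) * u = p * (p ^ k * u) := by ring
      have e2 : p * (p ^ k * u) = p * (p ^ k * u - 1) + p := by
        rw [← Nat.mul_add_one]
        congr 1
        omega
      omega
    rw [hstep, card_Pset_mul p hp hph]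
    push_cast
    rw [ih]
    ring

lemma main_ind (hp : p.Prime) {h : ℕ} (hph : p = 2 * h + 1) (u : ℕ) (hu : 0 < u) (k : ℕ) :
    (((Nset p (p ^ k * u)).card : ℤ)) =
      (((2 * h + 1) * (h + 1) : ℤ)) ^ k * (Nset p u).card
        - (((p : ℤ) ^ k - 1) / 2) * ((h : ℤ) + 1) ^ k * (Pset p (u - 1)).card := by
  have hpc : (p : ℤ) = 2 * h + 1 := by exact_mod_cast congrArg (Nat.cast (R := ℤ)) hph
  have hm : ∀ k : ℕ, ((p : ℤ) ^ k - 1) / 2 * 2 = (p : ℤ) ^ k - 1 := by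
    intro k
    apply Int.ediv_mul_cancel
    obtain ⟨c, hc⟩ : Odd ((p : ℤ) ^ k) := Odd.pow (by rw [hpc]; exact odd_two_mul_add_one (h : ℤ))
    exact ⟨c, by omega⟩
  induction k with
  | zero => simp
  | succ k ih =>
    have hstep := krec p hp hph (p ^ k * u) (Nat.mul_pos (pow_pos hp.pos k) hu)
    rw [show p ^ (k + 1) * u = p * (p ^ k * u) from by ring, hstep, ih,
      kphi p hp hph u hu k]
    have hmrec : ((p : ℤ) ^ (k + 1) - 1) / 2 = (2 * h + 1) * (((p : ℤ) ^ k - 1) / 2) + h := by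
      refine mul_left_cancel₀ (two_ne_zero (α := ℤ)) ?_
      have e1 := hm k
      have e2 := hm (k + 1)
      linear_combination e2 - (2 * (h : ℤ) + 1) * e1 + (p : ℤ) ^ k * hpc
    rw [hmrec]
    ring

end NpasAux

theorem Npas_pow_mul (p : ℕ) (hp : p.Prime) (hp3 : 3 ≤ p) (u : ℕ) (hu : 0 < u) (k : ℕ) :
    (Npas p (p ^ k * u) : ℤ) =
      ((p * (p + 1) / 2 : ℕ) : ℤ) ^ k * Npas p u
        - (((p : ℤ) ^ k - 1) / 2) * (((p + 1) / 2 : ℕ) : ℤ) ^ k * phi p ((u : ℤ) - 1) := by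
  obtain ⟨h, hph⟩ : ∃ h, p = 2 * h + 1 := by
    obtain ⟨h, hh⟩ := hp.odd_of_ne_two (by omega)
    exact ⟨h, by omega⟩
  have hcast1 : (p * (p + 1) / 2 : ℕ) = (2 * h + 1) * (h + 1) := by
    rw [hph, show (2 * h + 1) * (2 * h + 1 + 1) = ((2 * h + 1) * (h + 1)) * 2 from by ring,
      Nat.mul_div_cancel _ two_pos]
  have hcast2 : ((p + 1) / 2 : ℕ) = h + 1 := by omega
  have hphi : phi p ((u : ℤ) - 1) = (NpasAux.Pset p (u - 1)).card := by
    rw [show (u : ℤ) - 1 = ((u - 1 : ℕ) : ℤ) from by omega]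
    exact NpasAux.phi_eq p (u - 1)
  rw [NpasAux.Npas_eq, NpasAux.Npas_eq, hphi, hcast1, hcast2]
  have := NpasAux.main_ind p hp hph u hu k
  push_cast at this ⊢
  rw [this]
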